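/- Let p, m be coprime with 1 < p < m, with Euclidean algorithm quotients k_i, remainders p_i (p_s = 1, k_s := p_{s-1}), and convergents A_i, B_i as usual. Let u ≤ h ≤ s, and let α_u, …, α_h be integers with 0 ≤ α_i ≤ k_i and α_h > 0. Set x = Σ_{i=u}^h (-1)^{i+1} α_i A_i. Then x > 0 if and only if h is odd. -/

import Mathlib

theorem alternating_sum_A_pos_iff_odd
    (p m s : ℕ) (k P A : ℕ → ℕ)
    (hcop : Nat.Coprime p m) (hp : 1 < p) (hpm : p < m) (hs : 1 ≤ s)
    (hP0 : P 0 = p)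
    (hm : m = k 0 * P 0 + P 1)
    (hrec : ∀ i, 1 ≤ i → i ≤ s - 1 → P (i - 1) = k i * P i + P (i + 1))
    (hdec : ∀ i, 1 ≤ i → i ≤ s → P i < P (i - 1))
    (hPs : P s = 1)
    (hks : k s = P (s - 1))
    (hA0 : A 0 = 0) (hA1 : A 1 = 1)
    (hArec : ∀ i, 1 ≤ i → i ≤ s - 1 → A (i + 1) = A (i - 1) + k i * A i)
    (u h : ℕ) (huh : u ≤ h) (hhs : h ≤ s)
    (α : ℕ → ℕ) (hαk : ∀ i ∈ Finset.Icc u h, α i ≤ k i) (hαh : 0 < α h) :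
    0 < ∑ i ∈ Finset.Icc u h, (-1 : ℤ) ^ (i + 1) * (α i : ℤ) * (A i : ℤ) ↔ Odd h := by
  -- k i ≥ 1 in the relevant range
  have hk1 : ∀ i, 1 ≤ i → i ≤ s - 1 → 1 ≤ k i := by
    intro i h1 h2
    by_contra hk
    have hk0 : k i = 0 := by omega
    have e := hrec i h1 h2
    have d1 := hdec i h1 (by omega)
    have d2 := hdec (i + 1) (by omega) (by omega)
    simp only [Nat.add_sub_cancel] at d2
    rw [hk0] at e
    omega
  -- A i ≥ 1 for 1 ≤ i ≤ s
  have hA1' : ∀ i, 1 ≤ i → i ≤ s → 1 ≤ A i := by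
    intro i h1
    induction i, h1 using Nat.le_induction with
    | base => intro _; omega
    | succ i hi IH =>
      intro his
      have hles : i ≤ s - 1 := by omega
      have e := hArec i hi hles
      have := Nat.mul_le_mul (hk1 i hi hles) (IH (by omega))
      omega
  set T : ℕ → ℤ := fun j => ∑ i ∈ Finset.Icc u j, (-1 : ℤ) ^ (i + 1) * (α i : ℤ) * (A i : ℤ) with hT
  have key : ∀ j, j < h →
      (Odd j → T j ≤ (A (j + 1) : ℤ) ∧ 1 - (A j : ℤ) ≤ T j) ∧
      (Even j → T j ≤ (A j : ℤ) ∧ 1 - (A (j + 1) : ℤ) ≤ T j) := by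
    intro j
    induction j with
    | zero =>
      intro h0
      have hT0 : T 0 = 0 := by
        by_cases hu : u = 0
        · simp [hT, hu, hA0]
        · have : Finset.Icc u 0 = ∅ := by
            apply Finset.Icc_eq_empty; omega
          simp [hT, this]
      constructor
      · intro hodd; exact absurd hodd (by simp)
      · intro _
        rw [hT0, hA0]
        have : 1 ≤ A 1 := hA1' 1 le_rfl hs
        constructor
        · simp
        · have : (1 : ℤ) ≤ (A 1 : ℤ) := by exact_mod_cast this
          linarith
    | succ j IH =>
      intro hj1
      have IH' := IH (by omega)
      by_cases huj : u ≤ j + 1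
      · have hsum : T (j + 1) = T j + (-1 : ℤ) ^ (j + 1 + 1) * (α (j + 1) : ℤ) * (A (j + 1) : ℤ) := by
          simp [hT, Finset.sum_Icc_succ_top huj]
        have hαb : (α (j + 1) : ℤ) ≤ (k (j + 1) : ℤ) := by
          exact_mod_cast hαk (j + 1) (Finset.mem_Icc.mpr ⟨huj, by omega⟩)
        have hAnn : (0 : ℤ) ≤ (A (j + 1) : ℤ) := by positivity
        have hαA_nn : (0 : ℤ) ≤ (α (j + 1) : ℤ) * (A (j + 1) : ℤ) := by positivity
        have hαA_le : (α (j + 1) : ℤ) * (A (j + 1) : ℤ) ≤ (k (j + 1) : ℤ) * (A (j + 1) : ℤ) :=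
          mul_le_mul_of_nonneg_right hαb hAnn
        have hrecA : (A (j + 2) : ℤ) = (A j : ℤ) + (k (j + 1) : ℤ) * (A (j + 1) : ℤ) := by
          have e := hArec (j + 1) (by omega) (by omega)
          simp only [Nat.add_sub_cancel] at e
          exact_mod_cast e
        rcases Nat.even_or_odd (j + 1) with hev | hod
        · -- j+1 even, j odd
          have hjodd : Odd j := by
            rcases hev with ⟨t, ht⟩; exact ⟨t - 1, by omega⟩
          obtain ⟨hup, hlo⟩ := IH'.1 hjodd
          have hsign : (-1 : ℤ) ^ (j + 1 + 1) = -1 := by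
            have : Odd (j + 1 + 1) := by
              rcases hjodd with ⟨t, ht⟩; exact ⟨t + 1, by omega⟩
            exact this.neg_one_pow
          rw [hsign] at hsum
          constructor
          · intro hodd
            exact absurd hev (by simpa using hodd)
          · intro _
            constructor
            · -- T (j+1) ≤ A (j+1)
              rw [hsum]; linarith
            · -- 1 - A (j+2) ≤ T (j+1)
              rw [hsum, hrecA]; linarith
        · -- j+1 odd, j even
          have hjev : Even j := by
            rcases hod with ⟨t, ht⟩; exact ⟨t, by omega⟩
          obtain ⟨hup, hlo⟩ := IH'.2 hjev
          have hsign : (-1 : ℤ) ^ (j + 1 + 1) = 1 := by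
            have : Even (j + 1 + 1) := hod.add_one
            exact this.neg_one_pow
          rw [hsign] at hsum
          constructor
          · intro _
            constructor
            · rw [hsum, hrecA]; linarith
            · rw [hsum]; linarith
          · intro hev
            exact absurd hev (by simpa using hod)
      · -- empty sum
        have hemp : Finset.Icc u (j + 1) = ∅ := by
          apply Finset.Icc_eq_empty; omega
        have hT0 : T (j + 1) = 0 := by simp [hT, hemp]
        have h1 : 1 ≤ A (j + 1) := hA1' (j + 1) (by omega) (by omega)
        have h2 : 1 ≤ A (j + 2) := hA1' (j + 2) (by omega) (by omega)
        have h1' : (1 : ℤ) ≤ (A (j + 1) : ℤ) := by exact_mod_cast h1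
        have h2' : (1 : ℤ) ≤ (A (j + 2) : ℤ) := by exact_mod_cast h2
        constructor
        · intro _
          rw [hT0]
          constructor
          · positivity
          · linarith
        · intro _
          rw [hT0]
          constructor
          · positivity
          · linarith
  -- now the main statement
  rcases Nat.eq_zero_or_pos h with h0 | hpos
  · subst h0
    have hu0 : u = 0 := by omega
    subst hu0
    simp [hA0]
  · obtain ⟨j, rfl⟩ : ∃ j, h = j + 1 := ⟨h - 1, by omega⟩
    have hsum : T (j + 1) = T j + (-1 : ℤ) ^ (j + 1 + 1) * (α (j + 1) : ℤ) * (A (j + 1) : ℤ) := by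
      simp [hT, Finset.sum_Icc_succ_top huh]
    have hA1j : (1 : ℤ) ≤ (A (j + 1) : ℤ) := by
      exact_mod_cast hA1' (j + 1) (by omega) hhs
    have hα1 : (1 : ℤ) ≤ (α (j + 1) : ℤ) := by exact_mod_cast hαh
    have hαA : (A (j + 1) : ℤ) ≤ (α (j + 1) : ℤ) * (A (j + 1) : ℤ) :=
      le_mul_of_one_le_left (by positivity) hα1
    have key' := key j (by omega)
    show 0 < T (j + 1) ↔ Odd (j + 1)
    rcases Nat.even_or_odd (j + 1) with hev | hod
    · -- h even: T ≤ 0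
      have hjodd : Odd j := by rcases hev with ⟨t, ht⟩; exact ⟨t - 1, by omega⟩
      obtain ⟨hup, _⟩ := key'.1 hjodd
      have hsign : (-1 : ℤ) ^ (j + 1 + 1) = -1 := by
        have : Odd (j + 1 + 1) := by
          rcases hjodd with ⟨t, ht⟩; exact ⟨t + 1, by omega⟩
        exact this.neg_one_pow
      rw [hsign] at hsum
      have hle : T (j + 1) ≤ 0 := by rw [hsum]; linarith
      constructor
      · intro hpos'; linarith
      · intro hodd; exact absurd hev (by simpa using hodd)
    · -- h odd: T ≥ 1
      have hjev : Even j := by rcases hod with ⟨t, ht⟩; exact ⟨t, by omega⟩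
      obtain ⟨_, hlo⟩ := key'.2 hjev
      have hsign : (-1 : ℤ) ^ (j + 1 + 1) = 1 := hod.add_one.neg_one_pow
      rw [hsign] at hsum
      refine ⟨fun _ => hod, fun _ => ?_⟩
      rw [hsum]; linarith
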